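/- (Quantum characteristic functions vanish at infinity; Proposition 4.9, first part, in wave-function form.) Let m ≥ 1, let (f_i)_{i∈ℕ} be a family of unit vectors in L²(ℝ^m), and let (p_i)_{i∈ℕ} be nonnegative reals with Σ_i p_i = 1. Define F : ℝ^m × ℝ^m → ℂ by F(a,b) := Σ_i p_i · A_{f_i}(a,b). Then F is continuous on ℝ^{2m}, and F(a,b) → 0 as ‖(a,b)‖ → ∞; that is, F belongs to C₀(ℝ^{2m}). -/

import Mathlib

open MeasureTheory Filter RealInnerProductSpace

noncomputable section

/-- The ambiguity function `A_f(a,b) = ∫ conj(f(x))·f(x−a)·e^{i⟨b,x⟩} dx` of a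
square-integrable wave function `f` on `ℝ^m`. -/
def ambiguity {m : ℕ}
    (f : Lp ℂ 2 (volume : Measure (EuclideanSpace ℝ (Fin m))))
    (a b : EuclideanSpace ℝ (Fin m)) : ℂ :=
  ∫ x, (starRingEnd ℂ) (f x) * f (x - a) * Complex.exp (Complex.I * (⟪b, x⟫ : ℝ))



namespace MixedAmb

open Complex MeasureTheory Filter
open scoped Topology ENNReal NNReal

abbrev V (m : ℕ) := EuclideanSpace ℝ (Fin m)

variable {m : ℕ}

lemma phase_norm (r : ℝ) : ‖Complex.exp (Complex.I * (r : ℂ))‖ = 1 := by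
  rw [Complex.norm_exp]
  simp

lemma phase_norm' (r : ℝ) : ‖Complex.exp (-(Complex.I * (r : ℂ)))‖ = 1 := by
  rw [Complex.norm_exp]
  simp

def T (a : V m) : Lp ℂ 2 (volume : Measure (V m)) →+ Lp ℂ 2 (volume : Measure (V m)) :=
  Lp.compMeasurePreserving (· - a) (measurePreserving_sub_right volume a)

lemma coeFn_T (a : V m) (g : Lp ℂ 2 (volume : Measure (V m))) :
    T a g =ᵐ[volume] fun x => g (x - a) :=
  Lp.coeFn_compMeasurePreserving g (measurePreserving_sub_right volume a)

lemma norm_T (a : V m) (g : Lp ℂ 2 (volume : Measure (V m))) : ‖T a g‖ = ‖g‖ :=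
  Lp.norm_compMeasurePreserving g (measurePreserving_sub_right volume a)

lemma continuous_phase (b : V m) :
    Continuous fun x : V m => Complex.exp (-(Complex.I * ((⟪b, x⟫ : ℝ) : ℂ))) := by
  have h1 : Continuous fun x : V m => (⟪b, x⟫ : ℝ) :=
    continuous_const.inner continuous_id
  exact Complex.continuous_exp.comp ((continuous_const.mul
    (Complex.continuous_ofReal.comp h1)).neg)

lemma memℒp_mod (b : V m) (f : Lp ℂ 2 (volume : Measure (V m))) :
    MemLp (fun x => Complex.exp (-(Complex.I * ((⟪b, x⟫ : ℝ) : ℂ))) * f x) 2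
      (volume : Measure (V m)) := by
  refine (Lp.memLp f).of_le
    (((continuous_phase b).aestronglyMeasurable).mul (Lp.aestronglyMeasurable f)) ?_
  filter_upwards with x
  rw [norm_mul, phase_norm', one_mul]

def M (b : V m) (f : Lp ℂ 2 (volume : Measure (V m))) : Lp ℂ 2 (volume : Measure (V m)) :=
  (memℒp_mod b f).toLp _

lemma coeFn_M (b : V m) (f : Lp ℂ 2 (volume : Measure (V m))) :
    M b f =ᵐ[volume] fun x => Complex.exp (-(Complex.I * ((⟪b, x⟫ : ℝ) : ℂ))) * f x :=
  MemLp.coeFn_toLp _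

lemma norm_M (b : V m) (f : Lp ℂ 2 (volume : Measure (V m))) : ‖M b f‖ = ‖f‖ := by
  rw [M, Lp.norm_toLp, Lp.norm_def]
  congr 1
  refine eLpNorm_congr_norm_ae ?_
  filter_upwards with x
  rw [norm_mul, phase_norm', one_mul]

lemma M_sub (b : V m) (f g : Lp ℂ 2 (volume : Measure (V m))) :
    M b (f - g) = M b f - M b g := by
  refine Lp.ext ?_
  filter_upwards [coeFn_M b (f - g), Lp.coeFn_sub (M b f) (M b g), coeFn_M b f, coeFn_M b g,
    Lp.coeFn_sub f g] with x h1 h2 h3 h4 h5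
  rw [h1, h2]
  simp only [Pi.sub_apply]
  rw [h3, h4, h5]
  simp only [Pi.sub_apply]
  ring

lemma integral_eq_inner (f g : Lp ℂ 2 (volume : Measure (V m))) (a b : V m) :
    ∫ x, (starRingEnd ℂ) (f x) * g (x - a) * Complex.exp (Complex.I * ((⟪b, x⟫ : ℝ) : ℂ))
      = (inner ℂ (M b f) (T a g) : ℂ) := by
  rw [MeasureTheory.L2.inner_def]
  refine (integral_congr_ae ?_).symm
  filter_upwards [coeFn_M b f, coeFn_T a g] with x h1 h2
  rw [RCLike.inner_apply, h1, h2, map_mul, ← Complex.exp_conj]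
  simp only [map_neg, map_mul, Complex.conj_I, Complex.conj_ofReal, neg_mul, neg_neg]
  ring

lemma ambiguity_eq (f : Lp ℂ 2 (volume : Measure (V m))) (a b : V m) :
    ambiguity f a b = (inner ℂ (M b f) (T a f) : ℂ) :=
  integral_eq_inner f f a b

lemma amb_bound (f : Lp ℂ 2 (volume : Measure (V m))) (a b : V m) :
    ‖ambiguity f a b‖ ≤ ‖f‖ * ‖f‖ := by
  rw [ambiguity_eq]
  refine (norm_inner_le_norm _ _).trans ?_
  rw [norm_M, norm_T]

lemma amb_diff_bound (f G : Lp ℂ 2 (volume : Measure (V m))) (a b : V m) :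
    ‖ambiguity f a b - ambiguity G a b‖ ≤ ‖f - G‖ * ‖f‖ + ‖G‖ * ‖f - G‖ := by
  rw [ambiguity_eq, ambiguity_eq]
  have key : (inner ℂ (M b f) (T a f) : ℂ) - inner ℂ (M b G) (T a G)
      = (inner ℂ (M b f - M b G) (T a f) : ℂ) + inner ℂ (M b G) (T a f - T a G) := by
    rw [inner_sub_left, inner_sub_right]; ring
  rw [key]
  refine (norm_add_le _ _).trans (add_le_add ?_ ?_)
  · refine (norm_inner_le_norm _ _).trans ?_
    rw [← M_sub, norm_M, norm_T]
  · refine (norm_inner_le_norm _ _).trans ?_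
    rw [← map_sub, norm_M, norm_T]

section Nice

open scoped FourierTransform Real

/-- The ambiguity-type integral for plain functions. -/
def Phi (g h : V m → ℂ) (z : V m × V m) : ℂ :=
  ∫ x, (starRingEnd ℂ) (g x) * h (x - z.1) * Complex.exp (Complex.I * ((⟪z.2, x⟫ : ℝ) : ℂ))

lemma nice_integrable {g : V m → ℂ} (hgc : Continuous g) (hgs : HasCompactSupport g)
    {k : V m → ℂ} (hk : Continuous k) (a b : V m) :
    Integrable (fun x => (starRingEnd ℂ) (g x) * k (x - a)
      * Complex.exp (Complex.I * ((⟪b, x⟫ : ℝ) : ℂ))) volume := by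
  have hc : Continuous fun x : V m => (starRingEnd ℂ) (g x) * k (x - a)
      * Complex.exp (Complex.I * ((⟪b, x⟫ : ℝ) : ℂ)) := by
    have h1 : Continuous fun x : V m => Complex.exp (Complex.I * ((⟪b, x⟫ : ℝ) : ℂ)) :=
      Complex.continuous_exp.comp (continuous_const.mul
        (Complex.continuous_ofReal.comp (continuous_const.inner continuous_id)))
    exact ((continuous_star.comp hgc).mul (hk.comp (continuous_id.sub continuous_const))).mul h1
  refine hc.integrable_of_hasCompactSupport ?_
  have hsupp : HasCompactSupport fun x : V m => (starRingEnd ℂ) (g x) :=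
    hgs.comp_left (g := (starRingEnd ℂ)) (map_zero _)
  exact (hsupp.mul_right).mul_right

lemma nice_continuous {g h : V m → ℂ} (hgc : Continuous g) (hgs : HasCompactSupport g)
    (hhc : Continuous h) (hhs : HasCompactSupport h) :
    Continuous (Phi g h) := by
  obtain ⟨x₀, hx₀⟩ := hhc.norm.exists_forall_ge_of_hasCompactSupport hhs.norm
  refine continuous_of_dominated (bound := fun x => ‖g x‖ * ‖h x₀‖) ?_ ?_ ?_ ?_
  · intro z
    exact (nice_integrable hgc hgs hhc z.1 z.2).aestronglyMeasurable
  · intro z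
    filter_upwards with x
    rw [norm_mul, norm_mul, phase_norm, mul_one, RCLike.norm_conj]
    exact mul_le_mul_of_nonneg_left (hx₀ _) (norm_nonneg _)
  · exact (hgc.norm.integrable_of_hasCompactSupport hgs.norm).mul_const _
  · filter_upwards with x
    have h1 : Continuous fun z : V m × V m => Complex.exp (Complex.I * ((⟪z.2, x⟫ : ℝ) : ℂ)) :=
      Complex.continuous_exp.comp (continuous_const.mul (Complex.continuous_ofReal.comp
        ((continuous_snd).inner continuous_const)))
    exact (continuous_const.mul (hhc.comp (continuous_const.sub continuous_fst))).mul h1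

lemma nice_zero_far {g h : V m → ℂ} {Rg Rh : ℝ}
    (hRg : tsupport g ⊆ Metric.closedBall 0 Rg) (hRh : tsupport h ⊆ Metric.closedBall 0 Rh)
    {z : V m × V m} (hz : Rg + Rh < ‖z.1‖) : Phi g h z = 0 := by
  rw [Phi]
  rw [show (fun x : V m => (starRingEnd ℂ) (g x) * h (x - z.1)
      * Complex.exp (Complex.I * ((⟪z.2, x⟫ : ℝ) : ℂ))) = fun _ => (0 : ℂ) from ?_]
  · exact integral_zero _ _
  funext x
  by_cases hgx : g x = 0
  · rw [hgx, map_zero, zero_mul, zero_mul]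
  by_cases hhx : h (x - z.1) = 0
  · rw [hhx, mul_zero, zero_mul]
  exfalso
  have h1 : ‖x‖ ≤ Rg := by
    simpa using hRg (subset_tsupport g hgx)
  have h2 : ‖x - z.1‖ ≤ Rh := by
    simpa using hRh (subset_tsupport h hhx)
  have : ‖z.1‖ ≤ Rg + Rh := by
    calc ‖z.1‖ = ‖x - (x - z.1)‖ := by congr 1; abel
    _ ≤ ‖x‖ + ‖x - z.1‖ := norm_sub_le _ _
    _ ≤ Rg + Rh := add_le_add h1 h2
  linarith

lemma nice_RL (g h : V m → ℂ) (a : V m) :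
    Tendsto (fun b => Phi g h (a, b)) (cocompact (V m)) (𝓝 0) := by
  set u : V m → ℂ := fun x => (starRingEnd ℂ) (g x) * h (x - a) with hu
  set c : ℝ := -(2 * Real.pi)⁻¹ with hcdef
  have hc : c ≠ 0 := by
    simp [hcdef, Real.pi_ne_zero]
  have hmap : Tendsto (fun b : V m => c • b) (cocompact (V m)) (cocompact (V m)) := by
    have hEq : Filter.map (fun b : V m => c • b) (cocompact (V m)) = cocompact (V m) :=
      (Homeomorph.smulOfNeZero c hc).map_cocompact
    exact le_of_eq hEq
  have H := (tendsto_integral_exp_inner_smul_cocompact (f := u) (V := V m) (E := ℂ)).comp hmap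
  refine H.congr fun b => ?_
  simp only [Function.comp]
  refine integral_congr_ae (Filter.Eventually.of_forall fun x => ?_)
  simp only []
  rw [Circle.smul_def, Real.fourierChar_apply, real_inner_smul_right]
  have h2 : 2 * Real.pi * -(c * ⟪x, b⟫) = ⟪b, x⟫ := by
    rw [real_inner_comm, hcdef]
    field_simp
  rw [h2, hu]
  simp only
  rw [mul_comm Complex.I (((⟪b, x⟫ : ℝ) : ℂ)), smul_eq_mul]
  ring

lemma nice_diff_bound {g h : V m → ℂ} (hgc : Continuous g) (hgs : HasCompactSupport g)
    (hhc : Continuous h) {a c b : V m} {ε' : ℝ}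
    (hclose : ∀ x : V m, ‖h (x - a) - h (x - c)‖ ≤ ε') :
    ‖Phi g h (a, b) - Phi g h (c, b)‖ ≤ (∫ x, ‖g x‖) * ε' := by
  have int1 := nice_integrable hgc hgs hhc a b
  have int2 := nice_integrable hgc hgs hhc c b
  rw [Phi, Phi, ← integral_sub int1 int2]
  have hb : ‖∫ x, ((starRingEnd ℂ) (g x) * h (x - (a, b).1)
        * Complex.exp (Complex.I * ((⟪(a, b).2, x⟫ : ℝ) : ℂ))
      - (starRingEnd ℂ) (g x) * h (x - (c, b).1)
        * Complex.exp (Complex.I * ((⟪(c, b).2, x⟫ : ℝ) : ℂ)))‖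
      ≤ ∫ x, ‖g x‖ * ε' := by
    refine norm_integral_le_of_norm_le
      ((hgc.norm.integrable_of_hasCompactSupport hgs.norm).mul_const _) ?_
    filter_upwards with x
    have heq : (starRingEnd ℂ) (g x) * h (x - a) * Complex.exp (Complex.I * ((⟪b, x⟫ : ℝ) : ℂ))
        - (starRingEnd ℂ) (g x) * h (x - c) * Complex.exp (Complex.I * ((⟪b, x⟫ : ℝ) : ℂ))
        = (starRingEnd ℂ) (g x) * (h (x - a) - h (x - c))
          * Complex.exp (Complex.I * ((⟪b, x⟫ : ℝ) : ℂ)) := by ring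
    rw [heq, norm_mul, norm_mul, phase_norm, mul_one, RCLike.norm_conj]
    exact mul_le_mul_of_nonneg_left (hclose x) (norm_nonneg _)
  refine hb.trans ?_
  rw [integral_mul_const]

lemma nice_tendsto_cocompact {g h : V m → ℂ} (hgc : Continuous g) (hgs : HasCompactSupport g)
    (hhc : Continuous h) (hhs : HasCompactSupport h) :
    Tendsto (Phi g h) (cocompact (V m × V m)) (𝓝 0) := by
  -- radii for the supports
  obtain ⟨Rg, hRg⟩ := (hgs.isBounded).subset_closedBall (0 : V m)
  obtain ⟨Rh, hRh⟩ := (hhs.isBounded).subset_closedBall (0 : V m)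
  rw [Metric.tendsto_nhds]
  intro ε hε
  -- choose δ from uniform continuity of h
  set Ig : ℝ := ∫ x, ‖g x‖ with hIg
  have hIg0 : 0 ≤ Ig := integral_nonneg fun x => norm_nonneg _
  have hε' : 0 < ε / (2 * (Ig + 1)) := by positivity
  obtain ⟨δ, hδ0, hδ⟩ := Metric.uniformContinuous_iff.mp
    (hhs.uniformContinuous_of_continuous hhc) (ε / (2 * (Ig + 1))) hε'
  -- finite subcover of the ball of radius Rg + Rh
  have hCcpt : IsCompact (Metric.closedBall (0 : V m) (Rg + Rh)) := isCompact_closedBall _ _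
  obtain ⟨t, ht⟩ := hCcpt.elim_finite_subcover (fun c : V m => Metric.ball c δ)
    (fun c => Metric.isOpen_ball) (fun x _ => Set.mem_iUnion.2 ⟨x, Metric.mem_ball_self hδ0⟩)
  -- Riemann-Lebesgue eventually bound for the finitely many centers
  have hWev : ∀ᶠ b in cocompact (V m), ∀ c ∈ t, ‖Phi g h (c, b)‖ < ε / 2 := by
    rw [Filter.eventually_all_finset]
    intro c _
    have := Metric.tendsto_nhds.mp (nice_RL g h c) (ε / 2) (half_pos hε)
    simpa [dist_zero_right] using this
  obtain ⟨K, hKcpt, hKsub⟩ := Filter.mem_cocompact.mp hWev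
  refine Filter.mem_cocompact.mpr
    ⟨Metric.closedBall (0 : V m) (Rg + Rh) ×ˢ K, hCcpt.prod hKcpt, ?_⟩
  intro z hz
  simp only [Set.mem_compl_iff, Set.mem_prod, not_and_or] at hz
  have hzero : Rg + Rh < ‖z.1‖ → dist (Phi g h z) 0 < ε := by
    intro h1
    rw [nice_zero_far hRg hRh h1]
    simpa using hε
  rcases hz with hz1 | hz2
  · refine hzero ?_
    simpa [dist_zero_right] using hz1
  -- z.2 is in the good region for Riemann-Lebesgue
  have hgood : ∀ c ∈ t, ‖Phi g h (c, z.2)‖ < ε / 2 := hKsub hz2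
  by_cases h1 : Rg + Rh < ‖z.1‖
  · exact hzero h1
  have hz1C : z.1 ∈ Metric.closedBall (0 : V m) (Rg + Rh) := by
    simpa [dist_zero_right] using not_lt.mp h1
  obtain ⟨c, hct, hcball⟩ : ∃ c ∈ t, z.1 ∈ Metric.ball c δ := by
    have := ht hz1C
    simpa using this
  have hclose : ∀ x : V m, ‖h (x - z.1) - h (x - c)‖ ≤ ε / (2 * (Ig + 1)) := by
    intro x
    have hd : dist (x - z.1) (x - c) < δ := by
      rw [dist_eq_norm]
      have : x - z.1 - (x - c) = c - z.1 := by abel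
      rw [this, ← dist_eq_norm']
      exact Metric.mem_ball.mp hcball
    have := hδ hd
    rw [dist_eq_norm] at this
    exact this.le
  have hdiff := nice_diff_bound hgc hgs hhc (a := z.1) (c := c) (b := z.2) hclose
  have hmain : ‖Phi g h z‖ < ε := by
    have hIneq : Ig * (ε / (2 * (Ig + 1))) < ε / 2 := by
      calc Ig * (ε / (2 * (Ig + 1))) < (Ig + 1) * (ε / (2 * (Ig + 1))) :=
            mul_lt_mul_of_pos_right (by linarith) hε'
        _ = ε / 2 := by field_simp
    calc ‖Phi g h z‖ ≤ ‖Phi g h (z.1, z.2) - Phi g h (c, z.2)‖ + ‖Phi g h (c, z.2)‖ := by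
          simpa using norm_add_le (Phi g h (z.1, z.2) - Phi g h (c, z.2)) (Phi g h (c, z.2))
      _ < Ig * (ε / (2 * (Ig + 1))) + ε / 2 := by
          refine add_lt_add_of_le_of_lt (hdiff.trans ?_) (hgood c hct)
          rw [hIg]
      _ < ε / 2 + ε / 2 := by linarith
      _ = ε := by ring
  simpa [dist_zero_right] using hmain

end Nice


lemma approx_C0 {X : Type*} [TopologicalSpace X] {F : X → ℂ}
    (h : ∀ ε : ℝ, 0 < ε → ∃ φ : X → ℂ, Continuous φ ∧
      Tendsto φ (cocompact X) (𝓝 0) ∧ ∀ z, ‖F z - φ z‖ ≤ ε) :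
    Continuous F ∧ Tendsto F (cocompact X) (𝓝 0) := by
  have hseq : ∀ n : ℕ, ∃ φ : X → ℂ, Continuous φ ∧ Tendsto φ (cocompact X) (𝓝 0) ∧
      ∀ z, ‖F z - φ z‖ ≤ 1 / ((n : ℝ) + 1) := fun n => h (1 / ((n : ℝ) + 1)) (by positivity)
  choose φ hφc hφl hφb using hseq
  have hten : Tendsto (fun n : ℕ => 1 / ((n : ℝ) + 1)) atTop (𝓝 0) :=
    tendsto_one_div_add_atTop_nhds_zero_nat
  constructor
  · have hu : TendstoUniformly φ F atTop := by
      rw [Metric.tendstoUniformly_iff]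
      intro ε hε
      filter_upwards [hten.eventually (gt_mem_nhds hε)] with n hn x
      rw [dist_eq_norm]
      exact lt_of_le_of_lt (hφb n x) hn
    exact hu.continuous (Filter.Eventually.of_forall hφc).frequently
  · rw [Metric.tendsto_nhds]
    intro ε hε
    obtain ⟨n, hn⟩ := (hten.eventually (gt_mem_nhds (half_pos hε))).exists
    filter_upwards [Metric.tendsto_nhds.mp (hφl n) (ε / 2) (half_pos hε)] with z hz
    rw [dist_zero_right] at hz ⊢
    calc ‖F z‖ ≤ ‖F z - φ n z‖ + ‖φ n z‖ := by
          simpa using norm_add_le (F z - φ n z) (φ n z)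
      _ < 1 / ((n : ℝ) + 1) + ε / 2 := add_lt_add_of_le_of_lt (hφb n z) hz
      _ < ε / 2 + ε / 2 := by linarith
      _ = ε := add_halves ε

lemma ambiguity_toLp (g : V m → ℂ) (hgm : MemLp g 2 (volume : Measure (V m))) (a b : V m) :
    ambiguity (hgm.toLp g) a b = Phi g g (a, b) := by
  rw [ambiguity, Phi]
  refine integral_congr_ae ?_
  have hτ := measurePreserving_sub_right (volume : Measure (V m)) a
  have h2 : (fun x : V m => (hgm.toLp g : Lp ℂ 2 (volume : Measure (V m))) (x - a))
      =ᵐ[volume] fun x => g (x - a) := by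
    have hmap : ⇑(hgm.toLp g) =ᵐ[(volume : Measure (V m)).map (· - a)] g := by
      rw [hτ.map_eq]; exact hgm.coeFn_toLp
    exact MeasureTheory.ae_eq_comp hτ.measurable.aemeasurable hmap
  filter_upwards [hgm.coeFn_toLp, h2] with x hx1 hx2
  rw [hx1, hx2]

lemma amb_C0 (f : Lp ℂ 2 (volume : Measure (V m))) :
    Continuous (fun z : V m × V m => ambiguity f z.1 z.2) ∧
      Tendsto (fun z : V m × V m => ambiguity f z.1 z.2) (cocompact (V m × V m)) (𝓝 0) := by
  refine approx_C0 fun ε hε => ?_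
  set ε₀ : ℝ := min 1 (ε / (2 * ‖f‖ + 2)) with hε₀def
  have hε₀ : 0 < ε₀ := lt_min one_pos (by positivity)
  obtain ⟨g, hgs, hsub, hgc, hgm⟩ := (Lp.memLp f).exists_hasCompactSupport_eLpNorm_sub_le
    (by norm_num : (2 : ℝ≥0∞) ≠ ∞) (ε := ENNReal.ofReal ε₀)
    (ENNReal.ofReal_pos.mpr hε₀).ne'
  have hFG : ‖f - hgm.toLp g‖ ≤ ε₀ := by
    rw [Lp.norm_def]
    have hae : ⇑(f - hgm.toLp g) =ᵐ[volume] (⇑f - g) := by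
      filter_upwards [Lp.coeFn_sub f (hgm.toLp g), hgm.coeFn_toLp] with x h1 h2
      rw [h1, Pi.sub_apply, Pi.sub_apply, h2]
    rw [eLpNorm_congr_ae hae]
    exact ENNReal.toReal_le_of_le_ofReal hε₀.le hsub
  refine ⟨Phi g g, nice_continuous hgc hgs hgc hgs, nice_tendsto_cocompact hgc hgs hgc hgs,
    fun z => ?_⟩
  have hb := amb_diff_bound f (hgm.toLp g) z.1 z.2
  rw [ambiguity_toLp g hgm z.1 z.2] at hb
  have hGnorm : ‖(hgm.toLp g : Lp ℂ 2 (volume : Measure (V m)))‖ ≤ ‖f‖ + ε₀ := by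
    calc ‖(hgm.toLp g : Lp ℂ 2 (volume : Measure (V m)))‖
        = ‖f - (f - hgm.toLp g)‖ := by congr 1; abel
      _ ≤ ‖f‖ + ‖f - hgm.toLp g‖ := norm_sub_le _ _
      _ ≤ ‖f‖ + ε₀ := by linarith
  have hε₀1 : ε₀ ≤ 1 := min_le_left _ _
  have hε₀2 : ε₀ * (2 * ‖f‖ + 2) ≤ ε := by
    have h1 : ε₀ ≤ ε / (2 * ‖f‖ + 2) := min_le_right _ _
    rw [← le_div_iff₀ (by positivity)]
    exact h1
  have hf0 : (0 : ℝ) ≤ ‖f‖ := norm_nonneg _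
  calc ‖ambiguity f z.1 z.2 - Phi g g z‖
      ≤ ‖f - hgm.toLp g‖ * ‖f‖ + ‖(hgm.toLp g : Lp ℂ 2 (volume : Measure (V m)))‖
        * ‖f - hgm.toLp g‖ := by
        have : Phi g g z = Phi g g (z.1, z.2) := by rw [Prod.mk.eta]
        rw [this]; exact hb
    _ ≤ ε₀ * ‖f‖ + (‖f‖ + ε₀) * ε₀ := by
        have h1 := norm_nonneg (f - hgm.toLp g)
        nlinarith [hFG, hGnorm, hf0, hε₀.le]
    _ ≤ ε := by nlinarith [hε₀1, hε₀2, hf0, hε₀.le]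


end MixedAmb

open scoped Topology in
/-- Quantum characteristic functions vanish at infinity (Proposition 4.9, first
part, in wave-function form): for unit vectors `f_i ∈ L²(ℝ^m)` and a probability
distribution `(p_i)`, the function `F(a,b) = Σ_i p_i·A_{f_i}(a,b)` is continuous and
vanishes at infinity, i.e. `F ∈ C₀(ℝ^{2m})`. -/
theorem mixed_ambiguity_mem_C0
    (m : ℕ) (hm : 1 ≤ m)
    (f : ℕ → Lp ℂ 2 (volume : Measure (EuclideanSpace ℝ (Fin m))))
    (hf : ∀ i, ‖f i‖ = 1)
    (p : ℕ → ℝ) (hp : ∀ i, 0 ≤ p i) (hpsum : ∑' i, p i = 1)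
    (F : EuclideanSpace ℝ (Fin m) × EuclideanSpace ℝ (Fin m) → ℂ)
    (hF : F = fun ab => ∑' i, (p i : ℂ) * ambiguity (f i) ab.1 ab.2) :
    Continuous F ∧
      Tendsto F (Filter.cocompact
        (EuclideanSpace ℝ (Fin m) × EuclideanSpace ℝ (Fin m))) (nhds 0) := by
  have hamb : ∀ i : ℕ, Continuous (fun z : EuclideanSpace ℝ (Fin m) × EuclideanSpace ℝ (Fin m) =>
        ambiguity (f i) z.1 z.2) ∧
      Tendsto (fun z : EuclideanSpace ℝ (Fin m) × EuclideanSpace ℝ (Fin m) =>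
        ambiguity (f i) z.1 z.2)
        (cocompact (EuclideanSpace ℝ (Fin m) × EuclideanSpace ℝ (Fin m))) (𝓝 0) :=
    fun i => MixedAmb.amb_C0 (f i)
  have hsummable : Summable p := by
    by_contra hs
    rw [tsum_eq_zero_of_not_summable hs] at hpsum
    norm_num at hpsum
  have hbound : ∀ (i : ℕ) (z : EuclideanSpace ℝ (Fin m) × EuclideanSpace ℝ (Fin m)),
      ‖(p i : ℂ) * ambiguity (f i) z.1 z.2‖ ≤ p i := by
    intro i z
    rw [norm_mul, Complex.norm_real, Real.norm_of_nonneg (hp i)]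
    have h1 : ‖ambiguity (f i) z.1 z.2‖ ≤ 1 := by
      have := MixedAmb.amb_bound (f i) z.1 z.2
      rwa [hf i, one_mul] at this
    calc p i * ‖ambiguity (f i) z.1 z.2‖ ≤ p i * 1 :=
          mul_le_mul_of_nonneg_left h1 (hp i)
      _ = p i := mul_one _
  subst hF
  constructor
  · exact continuous_tsum (fun i => continuous_const.mul ((hamb i).1)) hsummable
      (fun i z => hbound i z)
  · have h := tendsto_tsum_of_dominated_convergence
      (𝓕 := cocompact (EuclideanSpace ℝ (Fin m) × EuclideanSpace ℝ (Fin m)))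
      (f := fun z i => (p i : ℂ) * ambiguity (f i) z.1 z.2)
      (g := fun _ : ℕ => (0 : ℂ)) (bound := p) hsummable
      (fun i => by simpa using ((hamb i).2.const_mul ((p i : ℂ))))
      (Filter.Eventually.of_forall fun z i => hbound i z)
    simpa using h
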